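/- Let k be a field of characteristic p, G a finite p-group, and N a normal subgroup of G. Define the relative lower central series γ_1^G(N) = G, γ_{n+1}^G(N) = [γ_n^G(N), N], and ideals J_1(N,G) = I(N)I(G), J_{n+1}(N,G) = I(N)J_n + J_n I(N). Then for every n ≥ 1, J_n(N,G) = ∑_{i=1}^{n} I(N)^{n+1−i} · (I(γ_i^G(N))·kG). -/

import Mathlib

/-- The relative lower central series: `γ_1^G(N) = G`, `γ_{n+1}^G(N) = [γ_n^G(N), N]`.
Here `gammaRel N i` is `γ_{i+1}^G(N)`. -/
def gammaRel {G : Type*} [Group G] (N : Subgroup G) : ℕ → Subgroup G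
  | 0 => ⊤
  | n + 1 => ⁅gammaRel N n, N⁆

/-- The ideals `J_n(N,G)`: `J_1 = I(N)·I(G)`, `J_{n+1} = I(N)·J_n + J_n·I(N)`.
Here `Jrel IN IG n` is `J_{n+1}`. -/
def Jrel {k R : Type*} [CommSemiring k] [Semiring R] [Algebra k R]
    (IN IG : Submodule k R) : ℕ → Submodule k R
  | 0 => IN * IG
  | n + 1 => IN * Jrel IN IG n + Jrel IN IG n * IN

namespace JrelAux

open Submodule MonoidAlgebra
open scoped commutatorElement

/-- The augmentation submodule attached to a subgroup. -/
noncomputable abbrev aug (k : Type*) [CommRing k] {G : Type*} [Group G] (H : Subgroup G) :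
    Submodule k (MonoidAlgebra k G) :=
  Submodule.span k {z : MonoidAlgebra k G | ∃ h ∈ H, z = MonoidAlgebra.of k G h - 1}

variable {k : Type*} [CommRing k] {G : Type*} [Group G]

lemma mem_of_forall_of {P : Submodule k (MonoidAlgebra k G)} (h : ∀ g : G, of k G g ∈ P)
    (x : MonoidAlgebra k G) : x ∈ P := by
  induction x using MonoidAlgebra.induction_on with
  | of g => exact h g
  | add f g hf hg => exact add_mem hf hg
  | smul r f hf => exact smul_mem _ r hf

lemma top_mul_top : (⊤ : Submodule k (MonoidAlgebra k G)) * ⊤ = ⊤ := by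
  refine le_antisymm le_top fun x _ => ?_
  simpa using Submodule.mul_mem_mul (M := (⊤ : Submodule k (MonoidAlgebra k G)))
    (N := ⊤) trivial (show (1 : MonoidAlgebra k G) ∈ ⊤ from trivial)

lemma le_mul_top (M : Submodule k (MonoidAlgebra k G)) : M ≤ M * ⊤ := fun x hx => by
  simpa using Submodule.mul_mem_mul hx (show (1 : MonoidAlgebra k G) ∈ (⊤ : Submodule _ _) from trivial)

/-- If `M` is stable under right multiplication by group elements then `M * ⊤ ≤ M`. -/
lemma mul_top_le {M P : Submodule k (MonoidAlgebra k G)}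
    (h : ∀ x ∈ M, ∀ g : G, x * of k G g ∈ P) : M * ⊤ ≤ P := by
  rw [Submodule.mul_le]
  intro m hm x _
  have hx : x ∈ P.comap (LinearMap.mulLeft k m) :=
    mem_of_forall_of (fun g => by simpa using h m hm g) x
  simpa using hx

lemma sum_le {ι : Type*} {s : Finset ι} {f : ι → Submodule k (MonoidAlgebra k G)}
    {P : Submodule k (MonoidAlgebra k G)} (h : ∀ i ∈ s, f i ≤ P) : ∑ i ∈ s, f i ≤ P := by
  classical
  induction s using Finset.induction_on with
  | empty => simpa [Submodule.zero_eq_bot] using bot_le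
  | @insert a s ha ih =>
    rw [Finset.sum_insert ha, Submodule.add_eq_sup]
    exact sup_le (h _ (Finset.mem_insert_self _ _)) (ih fun i hi => h i (Finset.mem_insert_of_mem hi))

lemma le_sum {ι : Type*} {s : Finset ι} {f : ι → Submodule k (MonoidAlgebra k G)}
    {i : ι} (hi : i ∈ s) : f i ≤ ∑ j ∈ s, f j := by
  classical
  rw [← Finset.add_sum_erase s f hi, Submodule.add_eq_sup]
  exact le_sup_left

lemma add_le' {A B P : Submodule k (MonoidAlgebra k G)} (h1 : A ≤ P) (h2 : B ≤ P) :
    A + B ≤ P := by rw [Submodule.add_eq_sup]; exact sup_le h1 h2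

lemma le_add_left {A B : Submodule k (MonoidAlgebra k G)} : A ≤ A + B := by
  rw [Submodule.add_eq_sup]; exact le_sup_left

lemma le_add_right {A B : Submodule k (MonoidAlgebra k G)} : B ≤ A + B := by
  rw [Submodule.add_eq_sup]; exact le_sup_right

/-- normality: `⊤ * I(H) ≤ I(H) * ⊤`. -/
lemma top_mul_aug_le (H : Subgroup G) [H.Normal] :
    (⊤ : Submodule k (MonoidAlgebra k G)) * aug k H ≤ aug k H * ⊤ := by
  rw [Submodule.mul_le]
  intro x _ y hy
  induction hy using Submodule.span_induction with
  | mem z hz =>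
    obtain ⟨h, hh, rfl⟩ := hz
    have hx : x ∈ (aug k H * ⊤).comap (LinearMap.mulRight k (of k G h - 1)) := by
      refine mem_of_forall_of (fun g => ?_) x
      have key : of k G g * (of k G h - 1) = (of k G (g * h * g⁻¹) - 1) * of k G g := by
        rw [mul_sub, sub_mul, mul_one, one_mul, ← map_mul, ← map_mul]
        congr 2
        group
      simp only [Submodule.mem_comap, LinearMap.mulRight_apply, key]
      exact Submodule.mul_mem_mul
        (subset_span ⟨g * h * g⁻¹, Subgroup.Normal.conj_mem ‹H.Normal› h hh g, rfl⟩) trivial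
    simpa using hx
  | zero => simpa using zero_mem _
  | add a b _ _ pa pb => rw [mul_add]; exact add_mem pa pb
  | smul r a _ pa => rw [mul_smul_comm]; exact smul_mem _ r pa

lemma aug_mul_top_le (H : Subgroup G) [H.Normal] :
    aug k H * (⊤ : Submodule k (MonoidAlgebra k G)) ≤ ⊤ * aug k H := by
  rw [Submodule.mul_le]
  intro y hy x _
  induction hy using Submodule.span_induction with
  | mem z hz =>
    obtain ⟨h, hh, rfl⟩ := hz
    have hx : x ∈ ((⊤ : Submodule k (MonoidAlgebra k G)) * aug k H).comap
        (LinearMap.mulLeft k (of k G h - 1)) := by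
      refine mem_of_forall_of (fun g => ?_) x
      have key : (of k G h - 1) * of k G g = of k G g * (of k G (g⁻¹ * h * g) - 1) := by
        rw [mul_sub, sub_mul, mul_one, one_mul, ← map_mul, ← map_mul]
        congr 2
        group
      simp only [Submodule.mem_comap, LinearMap.mulLeft_apply, key]
      exact Submodule.mul_mem_mul trivial
        (subset_span ⟨g⁻¹ * h * g, by simpa using Subgroup.Normal.conj_mem ‹H.Normal› h hh g⁻¹, rfl⟩)
    simpa using hx
  | zero => simpa using zero_mem _
  | add a b _ _ pa pb => rw [add_mul]; exact add_mem pa pb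
  | smul r a _ pa => rw [smul_mul_assoc]; exact smul_mem _ r pa

lemma aug_top_comm (H : Subgroup G) [H.Normal] :
    aug k H * (⊤ : Submodule k (MonoidAlgebra k G)) = ⊤ * aug k H :=
  le_antisymm (aug_mul_top_le H) (top_mul_aug_le H)

lemma K_mul_top (H : Subgroup G) :
    (aug k H * ⊤) * (⊤ : Submodule k (MonoidAlgebra k G)) = aug k H * ⊤ := by
  rw [mul_assoc, top_mul_top]

lemma aug_top_subgroup_mul_top :
    aug k (⊤ : Subgroup G) * (⊤ : Submodule k (MonoidAlgebra k G)) = aug k (⊤ : Subgroup G) := by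
  refine le_antisymm (mul_top_le ?_) (le_mul_top _)
  intro x hx g
  have : x ∈ (aug k (⊤ : Subgroup G)).comap (LinearMap.mulRight k (of k G g)) := by
    refine Submodule.span_le.2 ?_ hx
    rintro z ⟨h, -, rfl⟩
    have key : (of k G h - 1) * of k G g = (of k G (h * g) - 1) - (of k G g - 1) := by
      rw [sub_mul, one_mul, ← map_mul]
      abel
    simp only [SetLike.mem_coe, Submodule.mem_comap, LinearMap.mulRight_apply, key]
    exact sub_mem (subset_span ⟨h * g, trivial, rfl⟩) (subset_span ⟨g, trivial, rfl⟩)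
  simpa using this

/-- Reverse commutator inclusion: `I(A)·I(N) ≤ I(N)·I(A) + I([A,N])·kG`. -/
lemma aug_mul_aug_le (A N : Subgroup G) :
    aug k A * aug k N ≤ aug k N * aug k A + aug k ⁅A, N⁆ * ⊤ := by
  rw [Submodule.span_mul_span, Submodule.span_le]
  rintro z hz
  rw [Set.mem_mul] at hz
  obtain ⟨x, hx, y, hy, rfl⟩ := hz
  obtain ⟨a, ha, rfl⟩ := hx
  obtain ⟨b, hb, rfl⟩ := hy
  have hba : of k G ⁅a, b⁆ * of k G (b * a) = of k G a * of k G b := by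
    rw [← map_mul, ← map_mul]
    congr 1
    group
  have key : (of k G a - 1) * (of k G b - 1) =
      (of k G b - 1) * (of k G a - 1) + (of k G ⁅a, b⁆ - 1) * of k G (b * a) := by
    rw [sub_mul (of k G ⁅a, b⁆) 1 (of k G (b * a)), hba, one_mul, map_mul]
    noncomm_ring
  rw [key]
  exact add_mem
    (le_add_left (Submodule.mul_mem_mul (subset_span ⟨b, hb, rfl⟩) (subset_span ⟨a, ha, rfl⟩)))
    (le_add_right (Submodule.mul_mem_mul
      (subset_span ⟨⁅a, b⁆, Subgroup.commutator_mem_commutator ha hb, rfl⟩) trivial))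

/-- Forward commutator inclusion: `I([A,N])·kG ≤ (I(A)·kG)·I(N) + I(N)·(I(A)·kG)`. -/
lemma aug_commutator_top_le (A N : Subgroup G) [N.Normal] :
    aug k ⁅A, N⁆ * (⊤ : Submodule k (MonoidAlgebra k G)) ≤
      (aug k A * ⊤) * aug k N + aug k N * (aug k A * ⊤) := by
  set T := (aug k A * ⊤) * aug k N + aug k N * (aug k A * ⊤) with hT
  have e1 : ((aug k A * ⊤) * aug k N) * (⊤ : Submodule k (MonoidAlgebra k G))
      = (aug k A * ⊤) * aug k N := by
    rw [mul_assoc, aug_top_comm N, ← mul_assoc, mul_assoc (aug k A), top_mul_top]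
  have e2 : (aug k N * (aug k A * ⊤)) * (⊤ : Submodule k (MonoidAlgebra k G))
      = aug k N * (aug k A * ⊤) := by
    rw [mul_assoc, K_mul_top]
  have hTtop : T * ⊤ = T := by rw [hT, add_mul, e1, e2]
  have hmulg : ∀ x ∈ T, ∀ y : MonoidAlgebra k G, x * y ∈ T := by
    intro x hx y
    exact hTtop ▸ Submodule.mul_mem_mul hx (show y ∈ (⊤ : Submodule k (MonoidAlgebra k G)) from trivial)
  have haug : aug k ⁅A, N⁆ ≤ T := by
    rw [Submodule.span_le]
    rintro z ⟨h, hh, rfl⟩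
    rw [Subgroup.commutator_def] at hh
    clear_value T
    induction hh using Subgroup.closure_induction with
    | mem x hx =>
      obtain ⟨a, ha, b, hb, rfl⟩ := hx
      have hba : of k G ⁅a, b⁆ * of k G (b * a) = of k G a * of k G b := by
        rw [← map_mul, ← map_mul]; congr 1; group
      have hinv : of k G (b * a) * of k G ((b * a)⁻¹) = 1 := by
        rw [← map_mul, mul_inv_cancel, map_one]
      have key : of k G ⁅a, b⁆ - 1 =
          ((of k G a - 1) * (of k G b - 1)) * of k G ((b * a)⁻¹) -
            ((of k G b - 1) * (of k G a - 1)) * of k G ((b * a)⁻¹) := by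
        have expand : (of k G a - 1) * (of k G b - 1) - (of k G b - 1) * (of k G a - 1)
            = of k G ⁅a, b⁆ * of k G (b * a) - of k G (b * a) := by
          rw [hba, map_mul]; noncomm_ring
        rw [← sub_mul, expand, sub_mul, mul_assoc, hinv, mul_one]
      rw [SetLike.mem_coe, key]
      have m1 : ((of k G a - 1) * (of k G b - 1)) * of k G ((b * a)⁻¹) ∈
          (aug k A * aug k N) * (⊤ : Submodule k (MonoidAlgebra k G)) :=
        Submodule.mul_mem_mul (Submodule.mul_mem_mul (subset_span ⟨a, ha, rfl⟩)
          (subset_span ⟨b, hb, rfl⟩)) trivial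
      have m2 : ((of k G b - 1) * (of k G a - 1)) * of k G ((b * a)⁻¹) ∈
          (aug k N * aug k A) * (⊤ : Submodule k (MonoidAlgebra k G)) :=
        Submodule.mul_mem_mul (Submodule.mul_mem_mul (subset_span ⟨b, hb, rfl⟩)
          (subset_span ⟨a, ha, rfl⟩)) trivial
      have le1 : (aug k A * aug k N) * (⊤ : Submodule k (MonoidAlgebra k G)) ≤ T := by
        have : (aug k A * aug k N) * (⊤ : Submodule k (MonoidAlgebra k G))
            = (aug k A * ⊤) * aug k N := by
          rw [mul_assoc, aug_top_comm N, ← mul_assoc]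
        rw [this, hT]; exact le_add_left
      have le2 : (aug k N * aug k A) * (⊤ : Submodule k (MonoidAlgebra k G)) ≤ T := by
        rw [mul_assoc, hT]; exact le_add_right
      exact sub_mem (le1 m1) (le2 m2)
    | one =>
      have h1 : (of k G (1 : G) - 1 : MonoidAlgebra k G) = 0 := by
        rw [map_one, sub_self]
      show of k G (1 : G) - 1 ∈ (T : Set (MonoidAlgebra k G))
      rw [h1]
      exact zero_mem T
    | mul x y hx hy px py =>
      have key : of k G (x * y) - 1 = (of k G x - 1) * of k G y + (of k G y - 1) := by
        rw [map_mul]; noncomm_ring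
      rw [SetLike.mem_coe, key]
      exact add_mem (hmulg _ px _) py
    | inv x hx px =>
      have key : of k G x⁻¹ - 1 = -((of k G x - 1) * of k G x⁻¹) := by
        rw [sub_mul, one_mul, ← map_mul, mul_inv_cancel, map_one, neg_sub]
      rw [SetLike.mem_coe, key]
      exact neg_mem (hmulg _ px _)
  calc aug k ⁅A, N⁆ * ⊤ ≤ T * ⊤ := mul_le_mul_left haug _
    _ = T := hTtop

/-- `(I(A)·kG)·I(N) ≤ I(N)·(I(A)·kG) + I([A,N])·kG`. -/
lemma K_mul_aug_le (A N : Subgroup G) [N.Normal] :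
    (aug k A * (⊤ : Submodule k (MonoidAlgebra k G))) * aug k N ≤
      aug k N * (aug k A * ⊤) + aug k ⁅A, N⁆ * ⊤ := by
  have step : (aug k A * (⊤ : Submodule k (MonoidAlgebra k G))) * aug k N
      = (aug k A * aug k N) * ⊤ := by
    rw [mul_assoc, ← aug_top_comm N, ← mul_assoc]
  rw [step]
  calc (aug k A * aug k N) * (⊤ : Submodule k (MonoidAlgebra k G))
      ≤ (aug k N * aug k A + aug k ⁅A, N⁆ * ⊤) * ⊤ :=
        mul_le_mul_left (aug_mul_aug_le A N) _
    _ = aug k N * (aug k A * ⊤) + aug k ⁅A, N⁆ * ⊤ := by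
        rw [add_mul, mul_assoc, K_mul_top]

theorem main (N : Subgroup G) [N.Normal] (n : ℕ) :
    Jrel (aug k N) (aug k (⊤ : Subgroup G)) n =
      ∑ i ∈ Finset.range (n + 1), aug k N ^ (n + 1 - i) * (aug k (gammaRel N i) * ⊤) := by
  induction n with
  | zero =>
    show aug k N * aug k (⊤ : Subgroup G) = _
    rw [Finset.range_one, Finset.sum_singleton]
    have h0 : gammaRel N 0 = (⊤ : Subgroup G) := rfl
    rw [h0, show 0 + 1 - 0 = 1 from rfl, pow_one, aug_top_subgroup_mul_top]
  | succ n ih =>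
    have hstep : ∀ i : ℕ, gammaRel N (i + 1) = ⁅gammaRel N i, N⁆ := fun i => rfl
    show aug k N * Jrel (aug k N) (aug k (⊤ : Subgroup G)) n
        + Jrel (aug k N) (aug k (⊤ : Subgroup G)) n * aug k N = _
    rw [ih]
    have hP1 : ∀ i : ℕ, (aug k (gammaRel N i) * ⊤) * aug k N ≤
        aug k N * (aug k (gammaRel N i) * ⊤) + aug k (gammaRel N (i + 1)) * ⊤ := by
      intro i
      have h := K_mul_aug_le (k := k) (gammaRel N i) N
      rw [← hstep i] at h
      exact h
    refine le_antisymm (add_le' ?_ ?_) (sum_le fun i hi => ?_)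
    · -- IN * ∑ ≤ ∑'
      rw [Finset.mul_sum]
      refine sum_le fun i hi => ?_
      rw [Finset.mem_range] at hi
      have e : aug k N * (aug k N ^ (n + 1 - i) * (aug k (gammaRel N i) * ⊤))
          = aug k N ^ (n + 1 + 1 - i) * (aug k (gammaRel N i) * ⊤) := by
        rw [show n + 1 + 1 - i = (n + 1 - i) + 1 by omega, pow_succ']
        exact (mul_assoc _ _ _).symm
      rw [e]
      exact le_sum (f := fun j => aug k N ^ (n + 1 + 1 - j) * (aug k (gammaRel N j) * ⊤))
        (i := i) (Finset.mem_range.2 (by omega : i < n + 1 + 1))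
    · -- ∑ * IN ≤ ∑'
      rw [Finset.sum_mul]
      refine sum_le fun i hi => ?_
      rw [Finset.mem_range] at hi
      have e0 : aug k N ^ (n + 1 - i) * (aug k (gammaRel N i) * ⊤) * aug k N
          = aug k N ^ (n + 1 - i) * ((aug k (gammaRel N i) * ⊤) * aug k N) :=
        mul_assoc _ _ _
      have e1 : aug k N ^ (n + 1 - i) * (aug k N * (aug k (gammaRel N i) * ⊤))
          = aug k N ^ (n + 1 + 1 - i) * (aug k (gammaRel N i) * ⊤) := by
        rw [show n + 1 + 1 - i = (n + 1 - i) + 1 by omega, pow_succ, mul_assoc]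
      have e2 : aug k N ^ (n + 1 - i) * (aug k (gammaRel N (i + 1)) * ⊤)
          = aug k N ^ (n + 1 + 1 - (i + 1)) * (aug k (gammaRel N (i + 1)) * ⊤) := by
        rw [show n + 1 + 1 - (i + 1) = n + 1 - i by omega]
      calc aug k N ^ (n + 1 - i) * (aug k (gammaRel N i) * ⊤) * aug k N
          ≤ aug k N ^ (n + 1 - i) *
            (aug k N * (aug k (gammaRel N i) * ⊤) + aug k (gammaRel N (i + 1)) * ⊤) := by
            rw [e0]; exact mul_le_mul_right (hP1 i) _
        _ = aug k N ^ (n + 1 + 1 - i) * (aug k (gammaRel N i) * ⊤)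
            + aug k N ^ (n + 1 + 1 - (i + 1)) * (aug k (gammaRel N (i + 1)) * ⊤) := by
            rw [mul_add, e1, e2]
        _ ≤ _ := add_le'
            (le_sum (f := fun j => aug k N ^ (n + 1 + 1 - j) * (aug k (gammaRel N j) * ⊤))
              (i := i) (Finset.mem_range.2 (by omega : i < n + 1 + 1)))
            (le_sum (f := fun j => aug k N ^ (n + 1 + 1 - j) * (aug k (gammaRel N j) * ⊤))
              (i := i + 1) (Finset.mem_range.2 (by omega : i + 1 < n + 1 + 1)))
    · -- reverse inclusion
      rw [Finset.mem_range] at hi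
      rcases Nat.lt_or_ge i (n + 1) with hlt | hge
      · have e : aug k N ^ (n + 1 + 1 - i) * (aug k (gammaRel N i) * ⊤)
            = aug k N * (aug k N ^ (n + 1 - i) * (aug k (gammaRel N i) * ⊤)) := by
          rw [show n + 1 + 1 - i = (n + 1 - i) + 1 by omega, pow_succ']
          exact mul_assoc _ _ _
        rw [e]
        refine le_trans ?_ le_add_left
        exact mul_le_mul_right
          (le_sum (f := fun j => aug k N ^ (n + 1 - j) * (aug k (gammaRel N j) * ⊤))
            (Finset.mem_range.2 hlt)) _
      · have hii : i = n + 1 := by omega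
        subst hii
        rw [show n + 1 + 1 - (n + 1) = 1 by omega, pow_one]
        have hKsucc : aug k (gammaRel N (n + 1)) * ⊤ ≤
            (aug k (gammaRel N n) * ⊤) * aug k N + aug k N * (aug k (gammaRel N n) * ⊤) := by
          have h := aug_commutator_top_le (k := k) (gammaRel N n) N
          rw [← hstep n] at h
          exact h
        have hKn : aug k N * (aug k (gammaRel N n) * ⊤) ≤
            ∑ j ∈ Finset.range (n + 1), aug k N ^ (n + 1 - j) * (aug k (gammaRel N j) * ⊤) := by
          have h := le_sum (f := fun j => aug k N ^ (n + 1 - j) * (aug k (gammaRel N j) * ⊤))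
            (i := n) (Finset.mem_range.2 (Nat.lt_succ_self n))
          simpa [show n + 1 - n = 1 by omega] using h
        calc aug k N * (aug k (gammaRel N (n + 1)) * ⊤)
            ≤ aug k N * ((aug k (gammaRel N n) * ⊤) * aug k N
                + aug k N * (aug k (gammaRel N n) * ⊤)) :=
              mul_le_mul_right hKsucc _
          _ = (aug k N * (aug k (gammaRel N n) * ⊤)) * aug k N
                + aug k N * (aug k N * (aug k (gammaRel N n) * ⊤)) := by
              rw [mul_add]
              congr 1
              exact (mul_assoc _ _ _).symm
          _ ≤ (∑ j ∈ Finset.range (n + 1),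
                  aug k N ^ (n + 1 - j) * (aug k (gammaRel N j) * ⊤)) * aug k N
                + aug k N * ∑ j ∈ Finset.range (n + 1),
                  aug k N ^ (n + 1 - j) * (aug k (gammaRel N j) * ⊤) :=
              add_le_add (mul_le_mul_left hKn _) (mul_le_mul_right hKn _)
          _ ≤ _ := add_le' le_add_right le_add_left

end JrelAux

/-- For every `n ≥ 1` (here `n` is replaced by `n+1` with `n : ℕ`),
`J_n(N,G) = ∑_{i=1}^{n} I(N)^{n+1−i} · (I(γ_i^G(N))·kG)`. -/
theorem Jrel_eq_sum_gammaRel (p : ℕ) (hp : p.Prime) (k : Type*) [Field k] [CharP k p]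
    (G : Type*) [Group G] [Finite G] (hG : ∃ s : ℕ, Nat.card G = p ^ s)
    (N : Subgroup G) [N.Normal] (n : ℕ) :
    Jrel (Submodule.span k {z : MonoidAlgebra k G | ∃ h ∈ N, z = MonoidAlgebra.of k G h - 1})
        (Submodule.span k {z : MonoidAlgebra k G | ∃ h : G, z = MonoidAlgebra.of k G h - 1}) n =
      ∑ i ∈ Finset.range (n + 1),
        (Submodule.span k
            {z : MonoidAlgebra k G | ∃ h ∈ N, z = MonoidAlgebra.of k G h - 1}) ^ (n + 1 - i) *
          (Submodule.span k
            {z : MonoidAlgebra k G | ∃ h ∈ gammaRel N i, z = MonoidAlgebra.of k G h - 1} * ⊤) := by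
  have hset : {z : MonoidAlgebra k G | ∃ h : G, z = MonoidAlgebra.of k G h - 1}
      = {z : MonoidAlgebra k G | ∃ h ∈ (⊤ : Subgroup G), z = MonoidAlgebra.of k G h - 1} := by
    ext z; simp
  rw [hset]
  exact JrelAux.main N n
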